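/- arXiv:2602.03855 — 2 statements merged into one kernel-verified Lean document; each statement's English description precedes it below -/
import Mathlib

section
/- Let L ∈ ℝ^{n×s}, y ∈ ℝ^n nonzero, and x ∈ ℝ^s with Lx ≠ 0. Define the cosine similarity ξ(x) = (yᵀLx)/(‖y‖‖Lx‖). Then the operator norm of the Hessian of ξ at x satisfies ‖∇²ξ(x)‖ ≤ 5‖L‖²/‖Lx‖². -/
open RealInnerProductSpace ContinuousLinearMap

set_option synthInstance.maxHeartbeats 1000000
set_option maxHeartbeats 2000000

variable {E : Type*} [NormedAddCommGroup E] [InnerProductSpace ℝ E]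
variable {G : Type*} [NormedAddCommGroup G] [InnerProductSpace ℝ G]

lemma hasFDerivAt_normA (A : E →L[ℝ] G) {z : E} (h : A z ≠ 0) :
    HasFDerivAt (fun w => ‖A w‖) (‖A z‖⁻¹ • ((innerSL ℝ (A z)).comp A)) z := by
  have hz2 : ⟪A z, A z⟫ ≠ 0 := by
    simpa [real_inner_self_eq_norm_sq, pow_eq_zero_iff] using (norm_ne_zero_iff.2 h)
  have hin : HasFDerivAt (fun w => ⟪A w, A w⟫)
      ((fderivInnerCLM ℝ (A z, A z)).comp (A.prod A)) z :=
    (A.hasFDerivAt).inner ℝ (A.hasFDerivAt)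
  have := hin.sqrt hz2
  have hs : ∀ w : E, √(⟪A w, A w⟫) = ‖A w‖ := fun w => by
    rw [real_inner_self_eq_norm_sq]; exact Real.sqrt_sq (norm_nonneg _)
  convert this using 1
  · funext w; rw [hs w]
  · ext v
    simp only [ContinuousLinearMap.smul_apply, ContinuousLinearMap.coe_comp', Function.comp_apply,
      ContinuousLinearMap.prod_apply, fderivInnerCLM_apply, innerSL_apply_apply]
    rw [hs z, real_inner_comm (A v) (A z)]
    have : ‖A z‖ ≠ 0 := norm_ne_zero_iff.2 h
    field_simp
    ring

lemma hasFDerivAt_alpha (A : E →L[ℝ] G) (y : G) (hy : y ≠ 0) {x : E} (h : A x ≠ 0) :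
    HasFDerivAt (fun z => (‖y‖ * ‖A z‖)⁻¹)
      ((-(‖y‖ * ‖A x‖ ^ 3)⁻¹) • ((innerSL ℝ (A x)).comp A)) x := by
  have hr : ‖A x‖ ≠ 0 := norm_ne_zero_iff.2 h
  have hk : ‖y‖ ≠ 0 := norm_ne_zero_iff.2 hy
  have h1 : HasFDerivAt (fun z => ‖y‖ * ‖A z‖)
      (‖y‖ • (‖A x‖⁻¹ • ((innerSL ℝ (A x)).comp A))) x := (hasFDerivAt_normA A h).const_mul _
  have h2 := (hasDerivAt_inv (x := ‖y‖ * ‖A x‖) (by positivity)).comp_hasFDerivAt x h1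
  refine h2.congr_fderiv ?_
  ext v
  simp only [ContinuousLinearMap.smul_apply, neg_smul, ContinuousLinearMap.neg_apply,
    smul_eq_mul]
  field_simp

lemma hasFDerivAt_beta (A : E →L[ℝ] G) (y : G) (hy : y ≠ 0) {x : E} (h : A x ≠ 0) :
    HasFDerivAt (fun z => -(⟪y, A z⟫ * (‖y‖ * ‖A z‖ ^ 3)⁻¹))
      ((-(‖y‖ * ‖A x‖ ^ 3)⁻¹) • ((innerSL ℝ y).comp A)
        + (3 * ⟪y, A x⟫ * (‖y‖ * ‖A x‖ ^ 5)⁻¹) • ((innerSL ℝ (A x)).comp A)) x := by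
  have hr : ‖A x‖ ≠ 0 := norm_ne_zero_iff.2 h
  have hk : ‖y‖ ≠ 0 := norm_ne_zero_iff.2 hy
  have hnum : HasFDerivAt (fun z => ⟪y, A z⟫) ((innerSL ℝ y).comp A) x := by
    exact ((innerSL ℝ y).comp A).hasFDerivAt
  have hpow : HasFDerivAt (fun z => ‖A z‖ ^ 3)
      (((3 : ℕ) * ‖A x‖ ^ 2) • (‖A x‖⁻¹ • ((innerSL ℝ (A x)).comp A))) x :=
    by have := (hasDerivAt_pow 3 (‖A x‖)).comp_hasFDerivAt x (hasFDerivAt_normA A h); exact this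
  have hden : HasFDerivAt (fun z => ‖y‖ * ‖A z‖ ^ 3)
      (‖y‖ • (((3 : ℕ) * ‖A x‖ ^ 2) • (‖A x‖⁻¹ • ((innerSL ℝ (A x)).comp A)))) x :=
    hpow.const_mul _
  have hinv := (hasDerivAt_inv (x := ‖y‖ * ‖A x‖ ^ 3) (by positivity)).comp_hasFDerivAt x hden
  have hmul := (hnum.mul hinv).neg
  refine hmul.congr_fderiv ?_
  ext v
  simp only [ContinuousLinearMap.add_apply, ContinuousLinearMap.smul_apply,
    ContinuousLinearMap.neg_apply, smul_eq_mul, ContinuousLinearMap.coe_comp',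
    Function.comp_apply, innerSL_apply_apply, Nat.cast_ofNat]
  field_simp
  ring

noncomputable def Phi (A : E →L[ℝ] G) : E →L[ℝ] (E →L[ℝ] ℝ) :=
  ((ContinuousLinearMap.compL ℝ E G ℝ).flip A).comp ((innerSL ℝ (E := G)).comp A)

@[simp] lemma Phi_apply (A : E →L[ℝ] G) (z v : E) : Phi A z v = ⟪A z, A v⟫ := rfl

lemma Phi_eq (A : E →L[ℝ] G) (z : E) : Phi A z = (innerSL ℝ (A z)).comp A := rfl

lemma hasFDerivAt_xi (A : E →L[ℝ] G) (y : G) (hy : y ≠ 0) {x : E} (h : A x ≠ 0) :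
    HasFDerivAt (fun z => ⟪y, A z⟫ / (‖y‖ * ‖A z‖))
      ((‖y‖ * ‖A x‖)⁻¹ • ((innerSL ℝ y).comp A)
        + (-(⟪y, A x⟫ * (‖y‖ * ‖A x‖ ^ 3)⁻¹)) • (Phi A x)) x := by
  have hr : ‖A x‖ ≠ 0 := norm_ne_zero_iff.2 h
  have hk : ‖y‖ ≠ 0 := norm_ne_zero_iff.2 hy
  have hnum : HasFDerivAt (fun z => ⟪y, A z⟫) ((innerSL ℝ y).comp A) x :=
    ((innerSL ℝ y).comp A).hasFDerivAt
  have hdiv := hnum.mul (hasFDerivAt_alpha A y hy h)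
  simp only [div_eq_mul_inv]
  refine hdiv.congr_fderiv ?_
  ext v
  rw [Phi_eq]
  simp only [ContinuousLinearMap.add_apply, ContinuousLinearMap.smul_apply, neg_smul,
    ContinuousLinearMap.neg_apply, smul_eq_mul, ContinuousLinearMap.coe_smul',
    Pi.smul_apply, ContinuousLinearMap.coe_sub', Pi.sub_apply,
    ContinuousLinearMap.coe_comp', Function.comp_apply, innerSL_apply_apply]
  field_simp
  ring

lemma proj_norm_le {u w : G} (hu : u ≠ 0) : ‖w - (⟪u, w⟫ / ‖u‖ ^ 2) • u‖ ≤ ‖w‖ := by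
  have hu' : (0:ℝ) < ‖u‖ := norm_pos_iff.2 hu
  have hsq : ‖w - (⟪u, w⟫ / ‖u‖ ^ 2) • u‖ ^ 2 ≤ ‖w‖ ^ 2 := by
    rw [@norm_sub_sq_real]
    rw [real_inner_smul_right, norm_smul, mul_pow]
    have h1 : ⟪w, u⟫ = ⟪u, w⟫ := real_inner_comm _ _
    rw [h1]
    have h2 : ‖(⟪u, w⟫ / ‖u‖ ^ 2 : ℝ)‖ ^ 2 = (⟪u, w⟫ / ‖u‖ ^ 2) ^ 2 := by
      rw [Real.norm_eq_abs, sq_abs]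
    rw [h2]
    have ht : (⟪u, w⟫ / ‖u‖ ^ 2) * ‖u‖ ^ 2 = ⟪u, w⟫ := by
      field_simp
    have ht2 : (⟪u, w⟫ / ‖u‖ ^ 2) ^ 2 * ‖u‖ ^ 2 = (⟪u, w⟫ / ‖u‖ ^ 2) * ⟪u, w⟫ := by
      rw [sq, mul_assoc, ht]
    have ht3 : (0:ℝ) ≤ (⟪u, w⟫ / ‖u‖ ^ 2) * ⟪u, w⟫ := by
      have : (⟪u, w⟫ / ‖u‖ ^ 2) * ⟪u, w⟫ = ⟪u, w⟫ ^ 2 / ‖u‖ ^ 2 := by ring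
      rw [this]; positivity
    linarith
  nlinarith [norm_nonneg (w - (⟪u, w⟫ / ‖u‖ ^ 2) • u), norm_nonneg w]

variable (A : E →L[ℝ] G) (y : G)

noncomputable def Dmap : E → (E →L[ℝ] ℝ) := fun z =>
  (‖y‖ * ‖A z‖)⁻¹ • ((innerSL ℝ y).comp A)
    + (-(⟪y, A z⟫ * (‖y‖ * ‖A z‖ ^ 3)⁻¹)) • (Phi A z)

noncomputable def Hmap (x : E) : E →L[ℝ] (E →L[ℝ] ℝ) :=
  ((‖y‖ * ‖A x‖)⁻¹ • (0 : E →L[ℝ] (E →L[ℝ] ℝ))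
      + ((-(‖y‖ * ‖A x‖ ^ 3)⁻¹) • (Phi A x)).smulRight ((innerSL ℝ y).comp A))
    + ((-(⟪y, A x⟫ * (‖y‖ * ‖A x‖ ^ 3)⁻¹)) • (Phi A)
      + ((-(‖y‖ * ‖A x‖ ^ 3)⁻¹) • ((innerSL ℝ y).comp A)
          + (3 * ⟪y, A x⟫ * (‖y‖ * ‖A x‖ ^ 5)⁻¹) • (Phi A x)).smulRight (Phi A x))

lemma hasFDerivAt_Dmap (hy : y ≠ 0) {x : E} (hAx : A x ≠ 0) :
    HasFDerivAt (Dmap A y) (Hmap A y x) x := by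
  exact ((hasFDerivAt_alpha A y hy hAx).smul
      (hasFDerivAt_const ((innerSL ℝ y).comp A) x)).add
    ((hasFDerivAt_beta A y hy hAx).smul (Phi A).hasFDerivAt)

lemma Hmap_apply (x v : E) : Hmap A y x v =
    ((-(‖y‖ * ‖A x‖ ^ 3)⁻¹) * ⟪A x, A v⟫) • ((innerSL ℝ y).comp A)
    + ((-(⟪y, A x⟫ * (‖y‖ * ‖A x‖ ^ 3)⁻¹)) • (Phi A v)
      + ((-(‖y‖ * ‖A x‖ ^ 3)⁻¹) * ⟪y, A v⟫
          + (3 * ⟪y, A x⟫ * (‖y‖ * ‖A x‖ ^ 5)⁻¹) * ⟪A x, A v⟫) • (Phi A x)) := by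
  simp [Hmap, ContinuousLinearMap.smulRight_apply]

lemma norm_smul_clm (s : ℝ) (C : E →L[ℝ] ℝ) : ‖s • C‖ = |s| * ‖C‖ := by
  rw [norm_smul s C, Real.norm_eq_abs]

lemma Hmap_norm_le (hy : y ≠ 0) {x : E} (hAx : A x ≠ 0) (v : E) :
    ‖Hmap A y x v‖ ≤ 5 * ‖A‖ ^ 2 / ‖A x‖ ^ 2 * ‖v‖ := by
  have hr : (0:ℝ) < ‖A x‖ := norm_pos_iff.2 hAx
  have hk : (0:ℝ) < ‖y‖ := norm_pos_iff.2 hy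
  have hp : |⟪A x, A v⟫| ≤ ‖A x‖ * (‖A‖ * ‖v‖) :=
    (abs_real_inner_le_norm _ _).trans (mul_le_mul_of_nonneg_left (A.le_opNorm v) (norm_nonneg _))
  have hq : |⟪y, A v⟫| ≤ ‖y‖ * (‖A‖ * ‖v‖) :=
    (abs_real_inner_le_norm _ _).trans (mul_le_mul_of_nonneg_left (A.le_opNorm v) (norm_nonneg _))
  have hc : |⟪y, A x⟫| ≤ ‖y‖ * ‖A x‖ := abs_real_inner_le_norm _ _
  have hN : ‖(innerSL ℝ y).comp A‖ ≤ ‖y‖ * ‖A‖ :=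
    (ContinuousLinearMap.opNorm_comp_le _ _).trans (by rw [innerSL_apply_norm])
  have hPx : ‖Phi A x‖ ≤ ‖A x‖ * ‖A‖ := by
    rw [Phi_eq]
    exact (ContinuousLinearMap.opNorm_comp_le _ _).trans (by rw [innerSL_apply_norm])
  have hT4 : ‖(⟪A x, A v⟫ / ‖A x‖ ^ 2) • (Phi A x) - (Phi A v)‖ ≤ (‖A‖ * ‖v‖) * ‖A‖ := by
    have heq : (⟪A x, A v⟫ / ‖A x‖ ^ 2) • (Phi A x) - (Phi A v)
        = (innerSL ℝ ((⟪A x, A v⟫ / ‖A x‖ ^ 2) • A x - A v)).comp A := by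
      ext w
      simp [Phi_apply, inner_sub_left, real_inner_smul_left]
    rw [heq]
    refine (ContinuousLinearMap.opNorm_comp_le _ _).trans ?_
    rw [innerSL_apply_norm]
    have h1 : ‖(⟪A x, A v⟫ / ‖A x‖ ^ 2) • A x - A v‖ ≤ ‖A‖ * ‖v‖ := by
      rw [norm_sub_rev]
      exact (proj_norm_le hAx).trans (A.le_opNorm v)
    exact mul_le_mul_of_nonneg_right h1 (norm_nonneg _)
  have hid : Hmap A y x v =
      ((-(‖y‖ * ‖A x‖ ^ 3)⁻¹) * ⟪A x, A v⟫) • ((innerSL ℝ y).comp A)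
      + ((-(‖y‖ * ‖A x‖ ^ 3)⁻¹) * ⟪y, A v⟫) • (Phi A x)
      + (2 * ⟪y, A x⟫ * ⟪A x, A v⟫ * (‖y‖ * ‖A x‖ ^ 5)⁻¹) • (Phi A x)
      + (⟪y, A x⟫ * (‖y‖ * ‖A x‖ ^ 3)⁻¹) •
          ((⟪A x, A v⟫ / ‖A x‖ ^ 2) • (Phi A x) - (Phi A v)) := by
    rw [Hmap_apply]
    ext w
    simp only [ContinuousLinearMap.add_apply, ContinuousLinearMap.smul_apply,
      ContinuousLinearMap.sub_apply, ContinuousLinearMap.coe_comp', Function.comp_apply,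
      innerSL_apply_apply, smul_eq_mul, Phi_apply]
    field_simp
    ring
  have h1 : ‖((-(‖y‖ * ‖A x‖ ^ 3)⁻¹) * ⟪A x, A v⟫) • ((innerSL ℝ y).comp A)‖
      ≤ (‖y‖ * ‖A x‖ ^ 3)⁻¹ * (‖A x‖ * (‖A‖ * ‖v‖)) * (‖y‖ * ‖A‖) := by
    rw [norm_smul_clm, abs_mul, abs_neg, abs_inv,
      abs_of_pos (mul_pos hk (pow_pos hr 3))]
    gcongr
  have h2 : ‖((-(‖y‖ * ‖A x‖ ^ 3)⁻¹) * ⟪y, A v⟫) • (Phi A x)‖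
      ≤ (‖y‖ * ‖A x‖ ^ 3)⁻¹ * (‖y‖ * (‖A‖ * ‖v‖)) * (‖A x‖ * ‖A‖) := by
    rw [norm_smul_clm, abs_mul, abs_neg, abs_inv,
      abs_of_pos (mul_pos hk (pow_pos hr 3))]
    gcongr
  have h3 : ‖(2 * ⟪y, A x⟫ * ⟪A x, A v⟫ * (‖y‖ * ‖A x‖ ^ 5)⁻¹) • (Phi A x)‖
      ≤ 2 * (‖y‖ * ‖A x‖) * (‖A x‖ * (‖A‖ * ‖v‖)) * (‖y‖ * ‖A x‖ ^ 5)⁻¹ * (‖A x‖ * ‖A‖) := by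
    rw [norm_smul_clm, abs_mul, abs_mul, abs_mul, abs_two, abs_inv,
      abs_of_pos (mul_pos hk (pow_pos hr 5))]
    gcongr
  have h4 : ‖(⟪y, A x⟫ * (‖y‖ * ‖A x‖ ^ 3)⁻¹) •
        ((⟪A x, A v⟫ / ‖A x‖ ^ 2) • (Phi A x) - (Phi A v))‖
      ≤ (‖y‖ * ‖A x‖) * (‖y‖ * ‖A x‖ ^ 3)⁻¹ * ((‖A‖ * ‖v‖) * ‖A‖) := by
    rw [norm_smul_clm, abs_mul, abs_inv,
      abs_of_pos (mul_pos hk (pow_pos hr 3))]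
    gcongr
  rw [hid]
  have tri : ∀ a b c d : E →L[ℝ] ℝ, ‖a + b + c + d‖ ≤ ‖a‖ + ‖b‖ + ‖c‖ + ‖d‖ := by
    intro a b c d
    calc ‖a + b + c + d‖ ≤ ‖a + b + c‖ + ‖d‖ := norm_add_le _ _
      _ ≤ (‖a + b‖ + ‖c‖) + ‖d‖ := by gcongr; exact norm_add_le _ _
      _ ≤ ((‖a‖ + ‖b‖) + ‖c‖) + ‖d‖ := by gcongr; exact norm_add_le _ _
  refine (tri _ _ _ _).trans ?_
  have hfin : (‖y‖ * ‖A x‖ ^ 3)⁻¹ * (‖A x‖ * (‖A‖ * ‖v‖)) * (‖y‖ * ‖A‖)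
      + (‖y‖ * ‖A x‖ ^ 3)⁻¹ * (‖y‖ * (‖A‖ * ‖v‖)) * (‖A x‖ * ‖A‖)
      + 2 * (‖y‖ * ‖A x‖) * (‖A x‖ * (‖A‖ * ‖v‖)) * (‖y‖ * ‖A x‖ ^ 5)⁻¹ * (‖A x‖ * ‖A‖)
      + (‖y‖ * ‖A x‖) * (‖y‖ * ‖A x‖ ^ 3)⁻¹ * ((‖A‖ * ‖v‖) * ‖A‖)
      = 5 * ‖A‖ ^ 2 / ‖A x‖ ^ 2 * ‖v‖ := by
    field_simp
    ring
  linarith [h1, h2, h3, h4]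

noncomputable def dualIsoR (E : Type*) [NormedAddCommGroup E] [InnerProductSpace ℝ E]
    [CompleteSpace E] : (E →L[ℝ] ℝ) →L[ℝ] E :=
  LinearMap.mkContinuous
    { toFun := fun u => (InnerProductSpace.toDual ℝ E).symm u
      map_add' := fun u v => by simp
      map_smul' := fun c u => by
        simp [map_smulₛₗ, starRingEnd_apply, star_trivial] }
    1 (fun u => by simp)

lemma gradient_xi_bound [CompleteSpace E] (hy : y ≠ 0) {x : E} (hAx : A x ≠ 0)
    (ξ : E → ℝ) (hξ : ∀ z, ξ z = ⟪y, A z⟫ / (‖y‖ * ‖A z‖)) :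
    ‖fderiv ℝ (gradient ξ) x‖ ≤ 5 * ‖A‖ ^ 2 / ‖A x‖ ^ 2 := by
  have hev : ∀ᶠ z in nhds x, A z ≠ 0 := A.continuous.continuousAt.eventually_ne hAx
  have hξf : ξ = fun z => ⟪y, A z⟫ / (‖y‖ * ‖A z‖) := funext hξ
  have hfd : ∀ᶠ z in nhds x, fderiv ℝ ξ z = Dmap A y z := by
    filter_upwards [hev] with z hz
    rw [hξf]
    exact (hasFDerivAt_xi A y hy hz).fderiv
  have hgrad : gradient ξ =ᶠ[nhds x]
      fun z => (InnerProductSpace.toDual ℝ E).symm (Dmap A y z) := by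
    filter_upwards [hfd] with z hz
    show (InnerProductSpace.toDual ℝ E).symm (fderiv ℝ ξ z) = _
    rw [hz]
  set T : (E →L[ℝ] ℝ) →L[ℝ] E := dualIsoR E with hT_def
  have hTapp : ∀ u : E →L[ℝ] ℝ, T u = (InnerProductSpace.toDual ℝ E).symm u := fun u => rfl
  have hcomp : HasFDerivAt (fun z => (InnerProductSpace.toDual ℝ E).symm (Dmap A y z))
      (T.comp (Hmap A y x)) x := by
    have h1 : HasFDerivAt (fun u : E →L[ℝ] ℝ => T u) T (Dmap A y x) := T.hasFDerivAt
    have := h1.comp x (hasFDerivAt_Dmap A y hy hAx)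
    exact this
  rw [hgrad.fderiv_eq, hcomp.fderiv]
  refine ContinuousLinearMap.opNorm_le_bound _ (by positivity) fun v => ?_
  rw [ContinuousLinearMap.comp_apply, hTapp, LinearIsometryEquiv.norm_map]
  exact Hmap_norm_le A y hy hAx v

/-- The continuous linear map on Euclidean spaces induced by a matrix. -/
noncomputable def matCLM {n s : ℕ} (L : Matrix (Fin n) (Fin s) ℝ) :
    EuclideanSpace ℝ (Fin s) →L[ℝ] EuclideanSpace ℝ (Fin n) :=
  LinearMap.toContinuousLinearMap (Matrix.toEuclideanLin L)

/-- Hessian bound for the cosine similarity ξ(x) = yᵀLx / (‖y‖‖Lx‖). -/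
theorem hessian_cosSim_bound {n s : ℕ} (L : Matrix (Fin n) (Fin s) ℝ)
    (y : EuclideanSpace ℝ (Fin n)) (hy : y ≠ 0)
    (x : EuclideanSpace ℝ (Fin s)) (hLx : matCLM L x ≠ 0)
    (ξ : EuclideanSpace ℝ (Fin s) → ℝ)
    (hξ : ∀ z, ξ z = ⟪y, matCLM L z⟫ / (‖y‖ * ‖matCLM L z‖)) :
    ‖fderiv ℝ (gradient ξ) x‖ ≤ 5 * ‖matCLM L‖ ^ 2 / ‖matCLM L x‖ ^ 2 := by
  exact gradient_xi_bound (matCLM L) y hy hLx ξ hξ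
end

section
/- Let L ∈ ℝ^{n×s}, y ∈ ℝ^n nonzero, and suppose there exists δ > 0 such that ‖Lx‖ ≥ δ for all x in a set C ⊆ ℝ^s. Then the Hessian of the cosine similarity ξ(x) = (yᵀLx)/(‖y‖‖Lx‖) satisfies ‖∇²ξ(x)‖ ≤ 5‖L‖²/δ² for all x ∈ C. -/
set_option maxHeartbeats 2000000

open RealInnerProductSpace

variable {F : Type*} [NormedAddCommGroup F] [InnerProductSpace ℝ F]

theorem hasFDerivAt_norm_ne_zero (v : F) (hv : v ≠ 0) :
    HasFDerivAt (fun w : F => ‖w‖) (‖v‖⁻¹ • (innerSL ℝ v : F →L[ℝ] ℝ)) v := by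
  have h1 : HasFDerivAt (fun w : F => ‖w‖ ^ 2) (2 • (innerSL ℝ v)) v :=
    (hasStrictFDerivAt_norm_sq v).hasFDerivAt
  have hne : ‖v‖ ^ 2 ≠ 0 := pow_ne_zero 2 (norm_ne_zero_iff.2 hv)
  have h2 := (Real.hasDerivAt_sqrt hne).comp_hasFDerivAt v h1
  have heq : (fun w : F => Real.sqrt (‖w‖ ^ 2)) = fun w : F => ‖w‖ := by
    funext w; rw [Real.sqrt_sq (norm_nonneg w)]
  rw [Function.comp_def, heq] at h2
  refine h2.congr_fderiv ?_
  ext h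
  have hv' : ‖v‖ ≠ 0 := norm_ne_zero_iff.2 hv
  rw [Real.sqrt_sq (norm_nonneg v)]
  simp only [ContinuousLinearMap.coe_smul', Pi.smul_apply, ContinuousLinearMap.smul_apply]
  field_simp
  ring

variable {E : Type*} [NormedAddCommGroup E] [InnerProductSpace ℝ E]
  [CompleteSpace E] [CompleteSpace F]

theorem hasGradientAt_cossim (T : E →L[ℝ] F) (u : F) (x : E) (hx : T x ≠ 0) :
    HasGradientAt (fun z => ⟪u, T z⟫ * ‖T z‖⁻¹)
      (‖T x‖⁻¹ • (ContinuousLinearMap.adjoint T u)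
        - (⟪u, T x⟫ * (‖T x‖ ^ 3)⁻¹) • (ContinuousLinearMap.adjoint T (T x))) x := by
  have hrne : ‖T x‖ ≠ 0 := norm_ne_zero_iff.2 hx
  have hr : HasFDerivAt (fun z => ‖T z‖)
      ((‖T x‖⁻¹ • (innerSL ℝ (T x) : F →L[ℝ] ℝ)).comp T) x :=
    (hasFDerivAt_norm_ne_zero (T x) hx).comp x T.hasFDerivAt
  have hc : HasFDerivAt (fun z => ⟪u, T z⟫) ((innerSL ℝ u).comp T) x :=
    ((innerSL ℝ u).comp T).hasFDerivAt
  have hm := hc.mul ((hasDerivAt_inv hrne).comp_hasFDerivAt x hr)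
  rw [hasGradientAt_iff_hasFDerivAt]
  refine hm.congr_fderiv ?_
  ext h
  simp only [InnerProductSpace.toDual_apply_apply, ContinuousLinearMap.add_apply,
    ContinuousLinearMap.coe_smul', Pi.smul_apply, ContinuousLinearMap.smul_apply,
    ContinuousLinearMap.comp_apply, innerSL_apply_apply, smul_eq_mul, Function.comp_apply,
    inner_sub_left, real_inner_smul_left, ContinuousLinearMap.adjoint_inner_left]
  field_simp
  ring

theorem hessian_term_bound (T : E →L[ℝ] F) (u : F) (hu : ‖u‖ = 1) (x : E) (hx : T x ≠ 0) :
    ∃ Φ : E →L[ℝ] E,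
      HasFDerivAt (fun z => ‖T z‖⁻¹ • (ContinuousLinearMap.adjoint T u)
        - (⟪u, T z⟫ * (‖T z‖ ^ 3)⁻¹) • (ContinuousLinearMap.adjoint T (T z))) Φ x ∧
      ‖Φ‖ ≤ 5 * ‖T‖ ^ 2 / ‖T x‖ ^ 2 := by
  set A := ContinuousLinearMap.adjoint T with hA
  have hrne : ‖T x‖ ≠ 0 := norm_ne_zero_iff.2 hx
  have hrpos : (0:ℝ) < ‖T x‖ := norm_pos_iff.2 hx
  set R : E →L[ℝ] ℝ := (‖T x‖⁻¹ • (innerSL ℝ (T x) : F →L[ℝ] ℝ)).comp T with hR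
  have hr : HasFDerivAt (fun z => ‖T z‖) R x :=
    (hasFDerivAt_norm_ne_zero (T x) hx).comp x T.hasFDerivAt
  have hrinv := (hasDerivAt_inv hrne).comp_hasFDerivAt x hr
  have h1 := hrinv.smul_const (A u)
  have hg : HasDerivAt (fun t : ℝ => (t ^ 3)⁻¹)
      (-(↑3 * ‖T x‖ ^ 2) / (‖T x‖ ^ 3) ^ 2) ‖T x‖ := by
    have := (hasDerivAt_pow 3 ‖T x‖).inv (pow_ne_zero 3 hrne)
    simp at this ⊢
    exact this
  have hr3inv := hg.comp_hasFDerivAt x hr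
  have hc : HasFDerivAt (fun z => ⟪u, T z⟫) ((innerSL ℝ u).comp T) x :=
    ((innerSL ℝ u).comp T).hasFDerivAt
  have hs := hc.mul hr3inv
  have hv : HasFDerivAt (fun z => A (T z)) (A.comp T) x := (A.comp T).hasFDerivAt
  have h2 := hs.smul hv
  refine ⟨_, h1.sub h2, ?_⟩
  refine ContinuousLinearMap.opNorm_le_bound _ (by positivity) fun h => ?_
  simp only [ContinuousLinearMap.sub_apply, ContinuousLinearMap.add_apply,
    ContinuousLinearMap.smulRight_apply, ContinuousLinearMap.smul_apply,
    ContinuousLinearMap.coe_smul', Pi.smul_apply, ContinuousLinearMap.comp_apply,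
    innerSL_apply_apply, smul_eq_mul, hR, Function.comp_apply]
  set r := ‖T x‖ with hrdef
  set N := ‖T‖ with hNdef
  set P : ℝ := ⟪T x, T h⟫ with hPdef
  set cc : ℝ := ⟪u, T x⟫ with hccdef
  have hTh : ‖T h‖ ≤ N * ‖h‖ := T.le_opNorm h
  have hThn : ‖T h‖ ≥ 0 := norm_nonneg _
  have hNn : 0 ≤ N := norm_nonneg _
  have hhn : 0 ≤ ‖h‖ := norm_nonneg _
  have hP : |P| ≤ r * ‖T h‖ := by
    simpa using abs_real_inner_le_norm (T x) (T h)
  have hP' : |P| ≤ r * (N * ‖h‖) := hP.trans (by gcongr)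
  have hcc : |cc| ≤ r := by simpa [hu] using abs_real_inner_le_norm u (T x)
  have hAle : ∀ v : F, ‖A v‖ ≤ N * ‖v‖ := by
    intro v
    have h1 : ‖A v‖ ≤ ‖A‖ * ‖v‖ := A.le_opNorm v
    have h2 : ‖A‖ = N := by
      rw [hA, hNdef]
      exact ContinuousLinearMap.adjoint.norm_map T
    rwa [h2] at h1
  have hAu : ‖A u‖ ≤ N := by simpa [hu] using hAle u
  have hATh : ‖A (T h)‖ ≤ N * (N * ‖h‖) := (hAle (T h)).trans (by gcongr)
  have hATx : ‖A (T x)‖ ≤ N * r := hAle (T x)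
  -- decomposition of ⟪u, T h⟫
  set w : F := u - (cc / r ^ 2) • T x with hwdef
  set q : ℝ := ⟪w, T h⟫ with hqdef
  have hw2 : ‖w‖ ^ 2 = 1 - cc ^ 2 / r ^ 2 := by
    rw [hwdef, norm_sub_sq_real, real_inner_smul_right, norm_smul, hu]
    rw [← hccdef, ← hrdef, Real.norm_eq_abs, mul_pow, sq_abs]
    field_simp [mul_pow, sq_abs]
    ring
  have hw1 : ‖w‖ ≤ 1 := by
    nlinarith [norm_nonneg w, sq_nonneg (cc / r), hw2, sq_nonneg cc, sq_nonneg r,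
      div_nonneg (sq_nonneg cc) (sq_nonneg r)]
  have hq1 : |q| ≤ ‖T h‖ := by
    calc |q| ≤ ‖w‖ * ‖T h‖ := abs_real_inner_le_norm w (T h)
    _ ≤ 1 * ‖T h‖ := by gcongr
    _ = ‖T h‖ := one_mul _
  have hq' : |q| ≤ N * ‖h‖ := hq1.trans hTh
  have hdecomp : (⟪u, T h⟫ : ℝ) = q + cc / r ^ 2 * P := by
    rw [hqdef, hwdef, inner_sub_left, real_inner_smul_left, ← hPdef]
    ring
  -- the three terms
  have b1 : ‖(-(r ^ 2)⁻¹ * (r⁻¹ * P)) • A u‖ ≤ N ^ 2 / r ^ 2 * ‖h‖ := by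
    rw [norm_smul, Real.norm_eq_abs]
    have hk : |(-(r ^ 2)⁻¹ * (r⁻¹ * P))| ≤ N * ‖h‖ / r ^ 2 := by
      rw [abs_mul, abs_mul, abs_neg, abs_inv, abs_inv, abs_pow, abs_of_pos hrpos]
      calc (r ^ 2)⁻¹ * (r⁻¹ * |P|) ≤ (r ^ 2)⁻¹ * (r⁻¹ * (r * (N * ‖h‖))) := by gcongr
      _ = N * ‖h‖ / r ^ 2 := by field_simp
    calc |(-(r ^ 2)⁻¹ * (r⁻¹ * P))| * ‖A u‖ ≤ (N * ‖h‖ / r ^ 2) * N :=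
          mul_le_mul hk hAu (norm_nonneg _) (by positivity)
    _ = N ^ 2 / r ^ 2 * ‖h‖ := by ring
  have b2 : ‖(cc * (r ^ 3)⁻¹) • A (T h)‖ ≤ N ^ 2 / r ^ 2 * ‖h‖ := by
    rw [norm_smul, Real.norm_eq_abs]
    have hk : |cc * (r ^ 3)⁻¹| ≤ (r ^ 2)⁻¹ := by
      rw [abs_mul, abs_inv, abs_pow, abs_of_pos hrpos]
      calc |cc| * (r ^ 3)⁻¹ ≤ r * (r ^ 3)⁻¹ := by gcongr
      _ = (r ^ 2)⁻¹ := by field_simp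
    calc |cc * (r ^ 3)⁻¹| * ‖A (T h)‖ ≤ (r ^ 2)⁻¹ * (N * (N * ‖h‖)) :=
          mul_le_mul hk hATh (norm_nonneg _) (by positivity)
    _ = N ^ 2 / r ^ 2 * ‖h‖ := by field_simp
  have b3 : ‖(cc * (-(3 * r ^ 2) / (r ^ 3) ^ 2 * (r⁻¹ * P)) + (r ^ 3)⁻¹ * ⟪u, T h⟫) • A (T x)‖
      ≤ 3 * (N ^ 2 / r ^ 2 * ‖h‖) := by
    rw [norm_smul, Real.norm_eq_abs]
    have hk3 : cc * (-(3 * r ^ 2) / (r ^ 3) ^ 2 * (r⁻¹ * P)) + (r ^ 3)⁻¹ * ⟪u, T h⟫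
        = (q - 2 * (cc * P) * (r ^ 2)⁻¹) * (r ^ 3)⁻¹ := by
      rw [hdecomp]
      field_simp
      ring
    have hk : |cc * (-(3 * r ^ 2) / (r ^ 3) ^ 2 * (r⁻¹ * P)) + (r ^ 3)⁻¹ * ⟪u, T h⟫|
        ≤ 3 * (N * ‖h‖) / r ^ 3 := by
      rw [hk3, abs_mul, abs_inv, abs_pow, abs_of_pos hrpos]
      have h5 : |q - 2 * (cc * P) * (r ^ 2)⁻¹| ≤ 3 * (N * ‖h‖) := by
        have h6 : |2 * (cc * P) * (r ^ 2)⁻¹| ≤ 2 * (N * ‖h‖) := by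
          rw [abs_mul, abs_mul, abs_mul, abs_inv, abs_pow, abs_of_pos hrpos]
          have : |cc| * |P| ≤ r * (r * (N * ‖h‖)) :=
            mul_le_mul hcc hP' (abs_nonneg _) hrpos.le
          calc |(2:ℝ)| * (|cc| * |P|) * (r ^ 2)⁻¹
              ≤ |(2:ℝ)| * (r * (r * (N * ‖h‖))) * (r ^ 2)⁻¹ := by gcongr
          _ = 2 * (N * ‖h‖) := by
              rw [abs_two]
              field_simp
        calc |q - 2 * (cc * P) * (r ^ 2)⁻¹| ≤ |q| + |2 * (cc * P) * (r ^ 2)⁻¹| :=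
              abs_sub _ _
        _ ≤ N * ‖h‖ + 2 * (N * ‖h‖) := add_le_add hq' h6
        _ = 3 * (N * ‖h‖) := by ring
      calc |q - 2 * (cc * P) * (r ^ 2)⁻¹| * (r ^ 3)⁻¹ ≤ 3 * (N * ‖h‖) * (r ^ 3)⁻¹ := by
            gcongr
      _ = 3 * (N * ‖h‖) / r ^ 3 := by rw [div_eq_mul_inv]
    calc |cc * (-(3 * r ^ 2) / (r ^ 3) ^ 2 * (r⁻¹ * P)) + (r ^ 3)⁻¹ * ⟪u, T h⟫| * ‖A (T x)‖
        ≤ (3 * (N * ‖h‖) / r ^ 3) * (N * r) :=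
          mul_le_mul hk hATx (norm_nonneg _) (by positivity)
    _ = 3 * (N ^ 2 / r ^ 2 * ‖h‖) := by field_simp
  calc ‖(-(r ^ 2)⁻¹ * (r⁻¹ * P)) • A u -
        ((cc * (r ^ 3)⁻¹) • A (T h) +
          (cc * (-(3 * r ^ 2) / (r ^ 3) ^ 2 * (r⁻¹ * P)) + (r ^ 3)⁻¹ * ⟪u, T h⟫) • A (T x))‖
      ≤ ‖(-(r ^ 2)⁻¹ * (r⁻¹ * P)) • A u‖ +
        (‖(cc * (r ^ 3)⁻¹) • A (T h)‖ +
         ‖(cc * (-(3 * r ^ 2) / (r ^ 3) ^ 2 * (r⁻¹ * P)) + (r ^ 3)⁻¹ * ⟪u, T h⟫) • A (T x)‖) :=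
        (norm_sub_le _ _).trans (by gcongr; exact norm_add_le _ _)
  _ ≤ N ^ 2 / r ^ 2 * ‖h‖ + (N ^ 2 / r ^ 2 * ‖h‖ + 3 * (N ^ 2 / r ^ 2 * ‖h‖)) :=
        add_le_add b1 (add_le_add b2 b3)
  _ = 5 * N ^ 2 / r ^ 2 * ‖h‖ := by ring

/-- Uniform Hessian bound for the cosine similarity on a set where ‖Lx‖ ≥ δ. -/
theorem hessian_cosSim_uniform_bound {n s : ℕ} (L : Matrix (Fin n) (Fin s) ℝ)
    (y : EuclideanSpace ℝ (Fin n)) (hy : y ≠ 0)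
    (δ : ℝ) (hδ : 0 < δ) (C : Set (EuclideanSpace ℝ (Fin s)))
    (hC : ∀ x ∈ C, δ ≤ ‖matCLM L x‖)
    (ξ : EuclideanSpace ℝ (Fin s) → ℝ)
    (hξ : ∀ z, ξ z = ⟪y, matCLM L z⟫ / (‖y‖ * ‖matCLM L z‖)) :
    ∀ x ∈ C, ‖fderiv ℝ (gradient ξ) x‖ ≤ 5 * ‖matCLM L‖ ^ 2 / δ ^ 2 := by
  intro x hx
  set T := matCLM L with hT
  set u := ‖y‖⁻¹ • y with hudef
  have hyn : ‖y‖ ≠ 0 := norm_ne_zero_iff.2 hy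
  have hu : ‖u‖ = 1 := by
    rw [hudef, norm_smul, norm_inv, norm_norm, inv_mul_cancel₀ hyn]
  have hξ' : ξ = fun z => ⟪u, T z⟫ * ‖T z‖⁻¹ := by
    funext z
    rw [hξ z, hudef, real_inner_smul_left, div_eq_mul_inv, mul_inv]
    ring
  have hTx : T x ≠ 0 := by
    intro h0
    have := hC x hx
    rw [h0] at this
    simp at this
    linarith
  set G : EuclideanSpace ℝ (Fin s) → EuclideanSpace ℝ (Fin s) := fun z =>
    ‖T z‖⁻¹ • (ContinuousLinearMap.adjoint T u)
      - (⟪u, T z⟫ * (‖T z‖ ^ 3)⁻¹) • (ContinuousLinearMap.adjoint T (T z)) with hG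
  have hgrad : ∀ z, T z ≠ 0 → gradient ξ z = G z := by
    intro z hz
    rw [hξ']
    exact (hasGradientAt_cossim T u z hz).gradient
  obtain ⟨Φ, hΦ, hΦle⟩ := hessian_term_bound T u hu x hTx
  have hopen : IsOpen {z : EuclideanSpace ℝ (Fin s) | T z ≠ 0} :=
    isOpen_compl_singleton.preimage T.continuous
  have heq : gradient ξ =ᶠ[nhds x] G :=
    Filter.eventuallyEq_of_mem (hopen.mem_nhds hTx) hgrad
  have hfd : HasFDerivAt (gradient ξ) Φ x := hΦ.congr_of_eventuallyEq heq
  rw [hfd.fderiv]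
  refine hΦle.trans ?_
  have h1 : δ ^ 2 ≤ ‖T x‖ ^ 2 := by
    have := hC x hx
    nlinarith
  gcongr
end
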